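/- Let G be a simple graph, let i ≥ 1 be an integer, and let V_s and V_t be maximum independent sets of G (so |V_s| = |V_t| = α(G)). Construct G' by adding to G two new disjoint vertex sets L and R with |L| = i and |R| = 1, together with all edges between each vertex of L and each vertex of V(G) ∪ R. Let V'_s = V_s ∪ L ∪ R and V'_t = V_t ∪ L ∪ R, and let j = |V_s| + 1. Then there is a sequence of TJ steps transforming V_s into V_t in G in which every intermediate vertex subset is an independent set of G of size |V_s|, if and only if there is a sequence of TJ steps transforming V'_s into V'_t in G' in which every intermediate vertex subset induces an (i,j)-biclique in G'. -/

import Mathlib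

namespace Stmt17

/-- The vertex type of `G'`: the vertices of `G` plus the new vertex sets
`L = Fin i` and `R = Fin 1`. -/
abbrev Wt (V : Type*) (i : ℕ) := V ⊕ (Fin i ⊕ Fin 1)

variable {V : Type*}

/-- `S` is an independent set of `G`. -/
def Indep (G : SimpleGraph V) (S : Set V) : Prop :=
  ∀ u ∈ S, ∀ v ∈ S, ¬ G.Adj u v

/-- The graph `G'`, obtained from `G` by adding the vertex sets `L` (of size `i`) and
`R` (of size `1`), together with all edges between each vertex of `L` and each vertex
of `V(G) ∪ R`. -/
def newG (G : SimpleGraph V) (i : ℕ) : SimpleGraph (Wt V i) :=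
  SimpleGraph.fromEdgeSet
    (Sym2.map Sum.inl '' G.edgeSet ∪
      {e | ∃ (a : Fin i) (u : V), e = s(Sum.inr (Sum.inl a), Sum.inl u)} ∪
      {e | ∃ (a : Fin i) (r : Fin 1), e = s(Sum.inr (Sum.inl a), Sum.inr (Sum.inr r))})

/-- `V'` induces an `(i,j)`-biclique in `G`: the induced subgraph `G[V']` is a complete
bipartite graph with parts of sizes `i` and `j`. -/
def InducesBiclique {α : Type*} (G : SimpleGraph α) (i j : ℕ) (V' : Set α) : Prop :=
  ∃ A B : Set α, Disjoint A B ∧ A ∪ B = V' ∧ A.ncard = i ∧ B.ncard = j ∧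
    (∀ a ∈ A, ∀ b ∈ B, G.Adj a b) ∧
    (∀ a ∈ A, ∀ a' ∈ A, ¬ G.Adj a a') ∧
    (∀ b ∈ B, ∀ b' ∈ B, ¬ G.Adj b b')

/-- A single token-jumping (TJ) step on vertex subsets. -/
def TJStepV {α : Type*} (V1 V2 : Set α) : Prop :=
  ∃ u v, u ∈ V1 ∧ v ∉ V1 ∧ V2 = (V1 \ {u}) ∪ {v}

/-- There is a sequence of TJ steps from `Ws` to `Wt` in which every vertex subset
satisfies the property `P`. -/
def TJReachV {α : Type*} (P : Set α → Prop) (Ws Wt : Set α) : Prop :=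
  ∃ (l : ℕ) (f : ℕ → Set α), f 0 = Ws ∧ f l = Wt ∧
    (∀ k ≤ l, P (f k)) ∧ ∀ k < l, TJStepV (f k) (f (k + 1))


section Aux
variable {G : SimpleGraph V} {i : ℕ}


lemma adj_inl_inl {u v : V} : (newG G i).Adj (Sum.inl u) (Sum.inl v) ↔ G.Adj u v := by
  constructor
  · rintro ⟨h, hne⟩
    rcases h with ((⟨e, he, hmap⟩) | ⟨a, w, h⟩) | ⟨a, r, h⟩
    · induction e with
      | _ x y =>
        simp only [Sym2.map_pair_eq, Sym2.eq, Sym2.rel_iff'] at hmap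
        rcases hmap with ⟨h1, h2⟩ | ⟨h1, h2⟩ <;>
          simp_all [Sum.inl.injEq] <;>
          first
          | exact he
          | exact (SimpleGraph.mem_edgeSet G).mp he |>.symm
          |  exact G.symm ((SimpleGraph.mem_edgeSet G).mp he)
    · simp [Sym2.eq, Sym2.rel_iff'] at h
    · simp [Sym2.eq, Sym2.rel_iff'] at h
  · intro h
    refine ⟨Or.inl (Or.inl ⟨s(u,v), h, by simp⟩), by simp [h.ne]⟩

lemma adj_L_inl {a : Fin i} {u : V} : (newG G i).Adj (Sum.inr (Sum.inl a)) (Sum.inl u) :=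
  ⟨Or.inl (Or.inr ⟨a, u, rfl⟩), by simp⟩

lemma adj_L_R {a : Fin i} {r : Fin 1} :
    (newG G i).Adj (Sum.inr (Sum.inl a)) (Sum.inr (Sum.inr r)) :=
  ⟨Or.inr ⟨a, r, rfl⟩, by simp⟩

lemma not_adj_inl_R {u : V} {r : Fin 1} :
    ¬ (newG G i).Adj (Sum.inl u) (Sum.inr (Sum.inr r)) := by
  rintro ⟨h, -⟩
  rcases h with ((⟨e, he, hmap⟩) | ⟨a, w, h⟩) | ⟨a, r', h⟩
  · induction e with
    | _ x y => simp [Sym2.map_pair_eq, Sym2.eq, Sym2.rel_iff'] at hmap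
  · simp [Sym2.eq, Sym2.rel_iff'] at h
  · simp [Sym2.eq, Sym2.rel_iff'] at h

lemma not_adj_L_L {a b : Fin i} :
    ¬ (newG G i).Adj (Sum.inr (Sum.inl a)) (Sum.inr (Sum.inl b)) := by
  rintro ⟨h, -⟩
  rcases h with ((⟨e, he, hmap⟩) | ⟨a', w, h⟩) | ⟨a', r', h⟩
  · induction e with
    | _ x y => simp [Sym2.map_pair_eq, Sym2.eq, Sym2.rel_iff'] at hmap
  · simp [Sym2.eq, Sym2.rel_iff'] at h
  · simp [Sym2.eq, Sym2.rel_iff'] at h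

/-- The set `L` inside `Wt V i`. -/
def Lset (V : Type*) (i : ℕ) : Set (Wt V i) := Set.range (fun a : Fin i => Sum.inr (Sum.inl a))

/-- The distinguished vertex of `R`. -/
def r0 (V : Type*) (i : ℕ) : Wt V i := Sum.inr (Sum.inr 0)

lemma range_inr_eq : (Set.range Sum.inr : Set (Wt V i)) = Lset V i ∪ {r0 V i} := by
  ext x
  rcases x with u | (a | r)
  · simp [Lset, r0]
  · simp [Lset, r0]
  · simp [Lset, r0, Subsingleton.elim r 0]

lemma Lset_ncard : (Lset V i).ncard = i := by
  have hinj : Function.Injective (fun a : Fin i => (Sum.inr (Sum.inl a) : Wt V i)) := by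
    intro a b h; simpa using h
  rw [Lset, ← Set.image_univ, Set.ncard_image_of_injective _ hinj, Set.ncard_univ]
  simp

lemma biclique_of [Fintype V] (S : Set V) (hS : Indep G S) :
    InducesBiclique (newG G i) i (S.ncard + 1) (Sum.inl '' S ∪ Set.range Sum.inr) := by
  refine ⟨Lset V i, Sum.inl '' S ∪ {r0 V i}, ?_, ?_, Lset_ncard, ?_, ?_, ?_, ?_⟩
  · rw [Set.disjoint_left]
    rintro x ⟨a, rfl⟩ (⟨u, hu, h⟩ | h) <;> simp_all [r0]
  · rw [range_inr_eq]
    ext x; simp [or_comm, or_assoc, or_left_comm]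
  · rw [Set.union_singleton, Set.ncard_insert_of_notMem (by simp [r0]),
      Set.ncard_image_of_injective _ Sum.inl_injective]
  · rintro a ⟨a', rfl⟩ b (⟨u, hu, rfl⟩ | rfl)
    · exact adj_L_inl
    · exact adj_L_R
  · rintro a ⟨a', rfl⟩ b ⟨b', rfl⟩; exact not_adj_L_L
  · rintro b (⟨u, hu, rfl⟩ | rfl) b' (⟨u', hu', rfl⟩ | rfl)
    · rw [adj_inl_inl]; exact hS u hu u' hu'
    · exact not_adj_inl_R
    · intro h; exact not_adj_inl_R h.symm
    · exact fun h => h.ne rfl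

lemma biclique_char [Fintype V] {n : ℕ} (hmax : ∀ S : Set V, Indep G S → S.ncard ≤ n)
    (U : Set (Wt V i)) (h : InducesBiclique (newG G i) i (n + 1) U) :
    ∃ S : Set V, Indep G S ∧ S.ncard = n ∧ U = Sum.inl '' S ∪ Set.range Sum.inr := by
  obtain ⟨A, B, hdisj, hunion, hA, hB, hAB, hAA, hBB⟩ := h
  -- independence transfer
  have indep_of : ∀ X : Set (Wt V i), (∀ a ∈ X, ∀ b ∈ X, ¬ (newG G i).Adj a b) →
      Indep G (Sum.inl ⁻¹' X) := by
    intro X hX u hu v hv hadj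
    exact hX _ hu _ hv (adj_inl_inl.mpr hadj)
  -- r0 ∈ A ∪ B
  have hr0 : r0 V i ∈ A ∪ B := by
    by_contra hr
    rw [hunion] at hr
    by_cases hBL : ∃ a : Fin i, Sum.inr (Sum.inl a) ∈ B
    · obtain ⟨a0, ha0⟩ := hBL
      -- A ⊆ inl
      have hAinl : A ⊆ Set.range (Sum.inl : V → Wt V i) := by
        rintro x hx
        rcases x with u | (a | r)
        · exact ⟨u, rfl⟩
        · exact absurd (hAB _ hx _ ha0) not_adj_L_L
        · exact absurd (hunion ▸ Set.mem_union_left B hx)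
            (by simpa [r0, Subsingleton.elim r 0] using hr)
      -- B ⊆ L
      have hBL' : B ⊆ Lset V i := by
        rintro x hx
        rcases x with u | (a | r)
        · exact absurd ((hBB _ ha0 _ hx)) (fun h => h adj_L_inl)
        · exact ⟨a, rfl⟩
        · exact absurd (hunion ▸ Set.mem_union_right A hx)
            (by simpa [r0, Subsingleton.elim r 0] using hr)
      have h1 : n + 1 ≤ i := by
        have := Set.ncard_le_ncard hBL' (Set.toFinite _)
        rwa [hB, Lset_ncard] at this
      have h2 : i ≤ n := by
        have : A = Sum.inl '' (Sum.inl ⁻¹' A) := by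
          rw [Set.image_preimage_eq_iff.mpr ]
          exact hAinl
        have hcard := Set.ncard_image_of_injective (Sum.inl ⁻¹' A) (Sum.inl_injective : Function.Injective (Sum.inl : V → Wt V i))
        rw [← this, hA] at hcard
        rw [hcard]
        exact hmax _ (indep_of A hAA)
      omega
    · -- B ⊆ inl
      have hBinl : B ⊆ Set.range (Sum.inl : V → Wt V i) := by
        rintro x hx
        rcases x with u | (a | r)
        · exact ⟨u, rfl⟩
        · exact absurd hx (fun h => hBL ⟨a, h⟩)
        · exact absurd (hunion ▸ Set.mem_union_right A hx)
            (by simpa [r0, Subsingleton.elim r 0] using hr)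
      have : B = Sum.inl '' (Sum.inl ⁻¹' B) := (Set.image_preimage_eq_iff.mpr hBinl).symm
      have hcard := Set.ncard_image_of_injective (Sum.inl ⁻¹' B) (Sum.inl_injective : Function.Injective (Sum.inl : V → Wt V i))
      rw [← this, hB] at hcard
      have := hmax _ (indep_of B hBB)
      omega
  -- neighbors of r0 are in L
  have nbr_r0 : ∀ x : Wt V i, (newG G i).Adj x (r0 V i) → x ∈ Lset V i := by
    rintro (u | (a | r)) hadj
    · exact absurd hadj not_adj_inl_R
    · exact ⟨a, rfl⟩
    · rw [r0, Subsingleton.elim r 0] at hadj; exact absurd hadj ((newG G i).irrefl)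
  rcases hr0 with hr0A | hr0B
  · -- r0 ∈ A
    have hBL : B ⊆ Lset V i := fun b hb => nbr_r0 b (hAB _ hr0A _ hb).symm
    have h1 : n + 1 ≤ i := by
      have := Set.ncard_le_ncard hBL (Set.toFinite _)
      rwa [hB, Lset_ncard] at this
    obtain ⟨b0, hb0⟩ : B.Nonempty := by
      rw [← Set.ncard_pos]; omega
    obtain ⟨a0, rfl⟩ := hBL hb0
    set S := Sum.inl ⁻¹' A with hSdef
    have hAeq : A = Sum.inl '' S ∪ {r0 V i} := by
      ext x
      constructor
      · intro hx
        rcases x with u | (a | r)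
        · exact Or.inl ⟨u, hx, rfl⟩
        · exact absurd (hAB _ hx _ hb0) not_adj_L_L
        · exact Or.inr (by simp [r0, Subsingleton.elim r 0])
      · rintro (⟨u, hu, rfl⟩ | rfl)
        · exact hu
        · exact hr0A
    have hr0nm : r0 V i ∉ Sum.inl '' S := by simp [r0]
    have hScard : S.ncard + 1 = i := by
      rw [← hA, hAeq, Set.union_singleton, Set.ncard_insert_of_notMem hr0nm,
        Set.ncard_image_of_injective _ Sum.inl_injective]
    have hSle := hmax S (indep_of A hAA)
    have hSn : S.ncard = n := by omega
    have hieq : i = n + 1 := by omega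
    have hBeq : B = Lset V i := by
      apply Set.eq_of_subset_of_ncard_le hBL
      rw [Lset_ncard, hB]; omega
    refine ⟨S, indep_of A hAA, hSn, ?_⟩
    rw [← hunion, hAeq, hBeq, range_inr_eq, Set.union_assoc,
      Set.union_comm {r0 V i} (Lset V i)]
  · -- r0 ∈ B
    have hAL : A ⊆ Lset V i := fun a ha => nbr_r0 a (hAB _ ha _ hr0B)
    have hAeq : A = Lset V i := by
      apply Set.eq_of_subset_of_ncard_le hAL
      rw [Lset_ncard, hA]
    set S := Sum.inl ⁻¹' B with hSdef
    have hBeq : B = Sum.inl '' S ∪ {r0 V i} := by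
      ext x
      constructor
      · intro hx
        rcases x with u | (a | r)
        · exact Or.inl ⟨u, hx, rfl⟩
        · have hmem : Sum.inr (Sum.inl a) ∈ A := by
            rw [hAeq]; exact ⟨a, rfl⟩
          exact absurd hx (Set.disjoint_left.mp hdisj hmem)
        · exact Or.inr (by simp [r0, Subsingleton.elim r 0])
      · rintro (⟨u, hu, rfl⟩ | rfl)
        · exact hu
        · exact hr0B
    have hr0nm : r0 V i ∉ Sum.inl '' S := by simp [r0]
    have hScard : S.ncard + 1 = n + 1 := by
      rw [← hB, hBeq, Set.union_singleton, Set.ncard_insert_of_notMem hr0nm,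
        Set.ncard_image_of_injective _ Sum.inl_injective]
    refine ⟨S, indep_of B hBB, by omega, ?_⟩
    rw [← hunion, hAeq, hBeq, range_inr_eq, Set.union_left_comm]

lemma step_up {S1 S2 : Set V} (h : TJStepV S1 S2) :
    TJStepV (Sum.inl '' S1 ∪ Set.range Sum.inr : Set (Wt V i))
      (Sum.inl '' S2 ∪ Set.range Sum.inr) := by
  obtain ⟨u, v, hu, hv, rfl⟩ := h
  refine ⟨Sum.inl u, Sum.inl v, Or.inl ⟨u, hu, rfl⟩, ?_, ?_⟩
  · rintro (⟨w, hw, hwe⟩ | ⟨x, hx⟩)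
    · exact hv (Sum.inl_injective hwe ▸ hw)
    · exact absurd hx (by simp)
  · ext x
    rcases x with w | y
    · simp [Sum.inl.injEq]
    · simp

lemma step_down {U1 U2 : Set (Wt V i)} (h : TJStepV U1 U2)
    (h1 : Set.range Sum.inr ⊆ U1) (h2 : Set.range Sum.inr ⊆ U2) :
    TJStepV (Sum.inl ⁻¹' U1) (Sum.inl ⁻¹' U2) := by
  obtain ⟨u, v, hu, hv, rfl⟩ := h
  obtain ⟨v', rfl⟩ : ∃ v', v = Sum.inl v' := by
    rcases v with w | y
    · exact ⟨w, rfl⟩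
    · exact absurd (h1 ⟨y, rfl⟩) hv
  obtain ⟨u', rfl⟩ : ∃ u', u = Sum.inl u' := by
    rcases u with w | y
    · exact ⟨w, rfl⟩
    · have := h2 (⟨y, rfl⟩ : Sum.inr y ∈ Set.range Sum.inr)
      rcases this with ⟨hmem, hne⟩ | hv'
      · exact absurd rfl hne
      · exact absurd hv' (by simp)
  refine ⟨u', v', hu, hv, ?_⟩
  ext w
  simp [Sum.inl.injEq]

end Aux

theorem stmt17 [Fintype V] [DecidableEq V] (G : SimpleGraph V) (i : ℕ) (hi : 1 ≤ i)
    (Vs Vt : Set V) (hVs : Indep G Vs) (hVt : Indep G Vt)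
    (hVsMax : ∀ S : Set V, Indep G S → S.ncard ≤ Vs.ncard)
    (hVtMax : ∀ S : Set V, Indep G S → S.ncard ≤ Vt.ncard) :
    TJReachV (fun S => Indep G S ∧ S.ncard = Vs.ncard) Vs Vt ↔
      TJReachV (fun U => InducesBiclique (newG G i) i (Vs.ncard + 1) U)
        (Sum.inl '' Vs ∪ Set.range Sum.inr) (Sum.inl '' Vt ∪ Set.range Sum.inr) := by
  constructor
  · rintro ⟨l, f, h0, hl, hP, hstep⟩
    refine ⟨l, fun k => Sum.inl '' f k ∪ Set.range Sum.inr, by simp only [h0], by simp only [hl], ?_, ?_⟩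
    · intro k hk
      obtain ⟨hind, hcard⟩ := hP k hk
      have := biclique_of (G := G) (i := i) (f k) hind
      rwa [hcard] at this
    · intro k hk
      exact step_up (hstep k hk)
  · rintro ⟨l, F, h0, hl, hP, hstep⟩
    have hpre : ∀ S : Set V,
        Sum.inl ⁻¹' ((Sum.inl '' S ∪ Set.range Sum.inr : Set (Wt V i))) = S := by
      intro S; ext w; simp
    refine ⟨l, fun k => Sum.inl ⁻¹' F k, by simp only [h0, hpre], by simp only [hl, hpre], ?_, ?_⟩
    · intro k hk
      obtain ⟨S, hind, hcard, hUeq⟩ := biclique_char hVsMax _ (hP k hk)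
      simp only [hUeq, hpre]
      exact ⟨hind, hcard⟩
    · intro k hk
      obtain ⟨S1, -, -, hU1⟩ := biclique_char hVsMax _ (hP k hk.le)
      obtain ⟨S2, -, -, hU2⟩ := biclique_char hVsMax _ (hP (k + 1) hk)
      exact step_down (hstep k hk) (by rw [hU1]; exact Set.subset_union_right)
        (by rw [hU2]; exact Set.subset_union_right)


end Stmt17
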